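/- Let k be a positive integer, let η ∈ ℝ^k, and let Σ = I_k + η 1_k' + 1_k η'. If Σ is invertible and 1_k' Σ⁻¹ 1_k ≠ 0, then Σ⁻¹ − Σ⁻¹ J_k Σ⁻¹ / (1_k' Σ⁻¹ 1_k) = I_k − J_k/k. -/

import Mathlib

open Matrix Finset

/-- For `S = I_k + η 1_k' + 1_k η'` (a "type-H" covariance matrix), if `S` is
invertible and `1_k' S⁻¹ 1_k ≠ 0`, then
`S⁻¹ − S⁻¹ J_k S⁻¹ / (1_k' S⁻¹ 1_k) = I_k − J_k / k`. -/
theorem typeH_inverse_identity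
    (k : ℕ) (hk : 0 < k) (η : Fin k → ℝ)
    (S : Matrix (Fin k) (Fin k) ℝ)
    (hS : S = (1 : Matrix (Fin k) (Fin k) ℝ) +
      Matrix.of (fun i _ => η i) + Matrix.of (fun _ j => η j))
    (hinv : IsUnit S.det)
    (hone : ∑ i, ∑ j, S⁻¹ i j ≠ 0) :
    S⁻¹ - (∑ i, ∑ j, S⁻¹ i j)⁻¹ •
        (S⁻¹ * Matrix.of (fun _ _ => (1 : ℝ)) * S⁻¹) =
      (1 : Matrix (Fin k) (Fin k) ℝ) - (k : ℝ)⁻¹ • Matrix.of (fun _ _ => (1 : ℝ)) := by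
  have hk0 : (k : ℝ) ≠ 0 := Nat.cast_ne_zero.mpr hk.ne'
  set J : Matrix (Fin k) (Fin k) ℝ := Matrix.of (fun _ _ => (1 : ℝ)) with hJ
  set A : Matrix (Fin k) (Fin k) ℝ := S⁻¹ with hA
  set E1 : Matrix (Fin k) (Fin k) ℝ := Matrix.of (fun i _ => η i) with hE1
  set E2 : Matrix (Fin k) (Fin k) ℝ := Matrix.of (fun _ j => η j) with hE2
  set s : ℝ := ∑ i, η i with hs
  set q : ℝ := ∑ i, η i * η i with hq
  set c : ℝ := ∑ i, ∑ j, A i j with hc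
  have hSA : S * A = 1 := mul_nonsing_inv S hinv
  have hAS : A * S = 1 := nonsing_inv_mul S hinv
  -- product lemmas
  have hJJ : J * J = (k : ℝ) • J := by
    ext i j; simp [Matrix.mul_apply, hJ, Finset.card_univ]
  have hJE1 : J * E1 = s • J := by
    ext i j; simp [Matrix.mul_apply, hJ, hE1, hs]
  have hE1J : E1 * J = (k : ℝ) • E1 := by
    ext i j; simp [Matrix.mul_apply, hJ, hE1, Finset.card_univ, mul_comm]
  have hJE2 : J * E2 = (k : ℝ) • E2 := by
    ext i j; simp [Matrix.mul_apply, hJ, hE2, Finset.card_univ]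
  have hE2J : E2 * J = s • J := by
    ext i j; simp [Matrix.mul_apply, hJ, hE2, hs]
  have hE1E1 : E1 * E1 = s • E1 := by
    ext i j; simp [Matrix.mul_apply, hE1, hs, Finset.mul_sum, mul_comm]
  have hE2E2 : E2 * E2 = s • E2 := by
    ext i j; simp [Matrix.mul_apply, hE2, hs, ← Finset.sum_mul]
  have hE2E1 : E2 * E1 = q • J := by
    ext i j; simp [Matrix.mul_apply, hE1, hE2, hJ, hq]
  -- key identity with scaled projection
  have key : S * ((k : ℝ) • (1 : Matrix (Fin k) (Fin k) ℝ) - J) * S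
      = (k : ℝ) • S - ((1 + s) ^ 2 - (k : ℝ) * q) • J := by
    rw [hS]
    simp only [Matrix.mul_sub, Matrix.sub_mul, Matrix.mul_smul, Matrix.smul_mul,
      Matrix.mul_add, Matrix.add_mul, Matrix.mul_one, Matrix.one_mul,
      hJJ, hJE1, hE1J, hJE2, hE2J, hE1E1, hE2E2, hE2E1]
    module

  -- the unscaled projection identity
  have key2 : S * ((1 : Matrix (Fin k) (Fin k) ℝ) - (k : ℝ)⁻¹ • J) * S
      = S - ((k : ℝ)⁻¹ * ((1 + s) ^ 2 - (k : ℝ) * q)) • J := by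
    have hP : (1 : Matrix (Fin k) (Fin k) ℝ) - (k : ℝ)⁻¹ • J
        = (k : ℝ)⁻¹ • ((k : ℝ) • (1 : Matrix (Fin k) (Fin k) ℝ) - J) := by
      rw [smul_sub, smul_smul, inv_mul_cancel₀ hk0, one_smul]
    rw [hP, Matrix.mul_smul, Matrix.smul_mul, key, smul_sub, smul_smul, smul_smul,
      inv_mul_cancel₀ hk0, one_smul]
  set β : ℝ := (k : ℝ)⁻¹ * ((1 + s) ^ 2 - (k : ℝ) * q) with hβ
  -- transfer through the inverse
  have h2 : (1 : Matrix (Fin k) (Fin k) ℝ) - (k : ℝ)⁻¹ • J = A - β • (A * J * A) := by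
    calc (1 : Matrix (Fin k) (Fin k) ℝ) - (k : ℝ)⁻¹ • J
        = (A * S) * ((1 : Matrix (Fin k) (Fin k) ℝ) - (k : ℝ)⁻¹ • J) * (S * A) := by
          rw [hAS, hSA, one_mul, mul_one]
      _ = A * (S * ((1 : Matrix (Fin k) (Fin k) ℝ) - (k : ℝ)⁻¹ • J) * S) * A := by
          simp only [Matrix.mul_assoc]
      _ = A * (S - β • J) * A := by rw [key2]
      _ = A - β • (A * J * A) := by
          rw [Matrix.mul_sub, Matrix.sub_mul, Matrix.mul_smul, Matrix.smul_mul,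
            hAS, one_mul]
  -- sum of entries of both sides
  have hsumP : ∑ i, ∑ j, ((1 : Matrix (Fin k) (Fin k) ℝ) - (k : ℝ)⁻¹ • J) i j = 0 := by
    simp [Matrix.sub_apply, Matrix.one_apply, Matrix.smul_apply, hJ,
      Finset.sum_sub_distrib, Finset.card_univ, hk0]
  have hsumAJA : ∑ i, ∑ j, (A * J * A) i j = c * c := by
    have h1 : ∀ i j, (A * J * A) i j = (∑ m, A i m) * (∑ l, A l j) := by
      intro i j
      simp [Matrix.mul_apply, hJ, Finset.sum_mul, Finset.mul_sum]
    calc ∑ i, ∑ j, (A * J * A) i j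
        = ∑ i, ∑ j, (∑ m, A i m) * (∑ l, A l j) := by
          simp only [h1]
      _ = (∑ i, ∑ m, A i m) * (∑ j, ∑ l, A l j) := by
          rw [Finset.sum_mul_sum]
      _ = c * c := by rw [hc, Finset.sum_comm (f := fun l j => A l j)]
  have hsum : (0 : ℝ) = c - β * (c * c) := by
    have := congrArg (fun M : Matrix (Fin k) (Fin k) ℝ => ∑ i, ∑ j, M i j) h2
    rw [hsumP] at this
    rw [this]
    simp [Matrix.sub_apply, Matrix.smul_apply, Finset.sum_sub_distrib, Finset.mul_sum, ← hc,
      ← hsumAJA, Finset.mul_sum]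
  clear_value β
  have hβc : c⁻¹ = β := by
    have h3 : c * (β * c - 1) = 0 := by linear_combination hsum
    rcases mul_eq_zero.mp h3 with h | h
    · exact absurd h hone
    · have h4 : β * c = 1 := by linarith
      exact (eq_inv_of_mul_eq_one_left h4).symm
  rw [hβc, h2]
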